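/- Let L be a finite-dimensional solvable Lie algebra over a field F. Then every maximal subalgebra M of L has trivial c-section: for every chief factor C/D of L with D ⊆ M and L = M + C, one has M ∩ C = D. -/

import Mathlib

/-- `M` is a maximal (proper) subalgebra of `L`. -/
def IsMaximalSubalgebra {F : Type*} [Field F] {L : Type*} [LieRing L] [LieAlgebra F L]
    (M : LieSubalgebra F L) : Prop :=
  M ≠ ⊤ ∧ ∀ K : LieSubalgebra F L, M < K → K = ⊤

/-- `C/D` is a chief factor of `L`: `D < C` are ideals of `L` and there is no ideal of `L`
strictly between them (equivalently, `C/D` is a minimal nonzero ideal of `L/D`). -/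
def IsChiefFactor {F : Type*} [Field F] {L : Type*} [LieRing L] [LieAlgebra F L]
    (D C : LieIdeal F L) : Prop :=
  D < C ∧ ∀ K : LieIdeal F L, D ≤ K → K ≤ C → K = D ∨ K = C

/-- The subquotient `S/(S ∩ D)`, as a Lie algebra; when `D ⊆ S` this is `S/D`. -/
abbrev SubQuot {F : Type*} [Field F] {L : Type*} [LieRing L] [LieAlgebra F L]
    (S : LieSubalgebra F L) (D : LieIdeal F L) :=
  S ⧸ LieIdeal.comap S.incl D

/-- The core `M_L` of a subalgebra `M`: the largest ideal of `L` contained in `M`. -/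
def coreOf {F : Type*} [Field F] {L : Type*} [LieRing L] [LieAlgebra F L]
    (M : LieSubalgebra F L) : LieIdeal F L :=
  sSup {I : LieIdeal F L | (I : Set L) ⊆ M}

/-- Chief factors of a solvable Lie algebra are abelian: `⁅C, C⁆ ≤ D`. -/
theorem chief_abelian {F : Type*} [Field F] {L : Type*} [LieRing L]
    [LieAlgebra F L] [LieAlgebra.IsSolvable L] {C D : LieIdeal F L}
    (h : IsChiefFactor D C) : ⁅C, C⁆ ≤ D := by
  obtain ⟨hlt, hmin⟩ := h
  rcases hmin (D ⊔ ⁅C, C⁆) le_sup_left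
      (sup_le hlt.le (LieSubmodule.lie_le_left C C)) with hK | hK
  · exact le_trans le_sup_right hK.le
  · -- C = D ⊔ ⁅C,C⁆ forces C ≤ D by solvability, contradiction
    exfalso
    have key : ∀ n : ℕ, C ≤ D ⊔ LieAlgebra.derivedSeriesOfIdeal F L n C := by
      intro n
      induction n with
      | zero => simp [LieAlgebra.derivedSeriesOfIdeal_zero]
      | succ n ih =>
        have h1 : (⁅C, C⁆ : LieIdeal F L) ≤
            D ⊔ LieAlgebra.derivedSeriesOfIdeal F L (n + 1) C := by
          calc (⁅C, C⁆ : LieIdeal F L)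
              ≤ ⁅D ⊔ LieAlgebra.derivedSeriesOfIdeal F L n C,
                 D ⊔ LieAlgebra.derivedSeriesOfIdeal F L n C⁆ :=
                LieSubmodule.mono_lie ih ih
            _ ≤ D ⊔ LieAlgebra.derivedSeriesOfIdeal F L (n + 1) C := by
                rw [LieSubmodule.sup_lie, LieSubmodule.lie_sup, LieSubmodule.lie_sup,
                  LieAlgebra.derivedSeriesOfIdeal_succ]
                refine sup_le (sup_le ?_ ?_) (sup_le ?_ le_sup_right)
                · exact le_trans (LieSubmodule.lie_le_left _ _) le_sup_left
                · exact le_trans (LieSubmodule.lie_le_left _ _) le_sup_left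
                · exact le_trans (LieSubmodule.lie_le_right _ _) le_sup_left
        calc C = D ⊔ ⁅C, C⁆ := hK.symm
          _ ≤ D ⊔ (D ⊔ LieAlgebra.derivedSeriesOfIdeal F L (n + 1) C) :=
            sup_le le_sup_left (le_trans h1 le_sup_right)
          _ = D ⊔ LieAlgebra.derivedSeriesOfIdeal F L (n + 1) C := by rw [← sup_assoc, sup_idem]
    obtain ⟨k, hk⟩ := LieAlgebra.IsSolvable.solvable (R := F) (L := L)
    have hCk : LieAlgebra.derivedSeriesOfIdeal F L k C = ⊥ := by
      rw [eq_bot_iff, ← hk]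
      exact LieAlgebra.derivedSeriesOfIdeal_mono le_top k
    have := key k
    rw [hCk, sup_bot_eq] at this
    exact hlt.not_ge this

/-- In a finite-dimensional solvable Lie algebra every maximal subalgebra has trivial
c-section: if `C/D` is a chief factor with `D ⊆ M` and `L = M + C`, then `M ∩ C = D`. -/
theorem cSections_trivial_of_solvable {F : Type*} [Field F] {L : Type*} [LieRing L]
    [LieAlgebra F L] [FiniteDimensional F L] [LieAlgebra.IsSolvable L] :
    ∀ M : LieSubalgebra F L, IsMaximalSubalgebra M →
      ∀ C D : LieIdeal F L, IsChiefFactor D C → (D : Set L) ⊆ (M : Set L) →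
        M.toSubmodule ⊔ C.toSubmodule = ⊤ → (M : Set L) ∩ (C : Set L) = (D : Set L) := by
  intro M hM C D hCD hDM hsup
  have habel : ⁅C, C⁆ ≤ D := chief_abelian hCD
  have hDC : D ≤ C := hCD.1.le
  -- M ∩ C is an ideal of L
  set N : LieIdeal F L :=
    { toSubmodule := M.toSubmodule ⊓ C.toSubmodule
      lie_mem := by
        rintro x m ⟨hmM, hmC⟩
        have hx : x ∈ M.toSubmodule ⊔ C.toSubmodule := by rw [hsup]; trivial
        obtain ⟨a, haM, b, hbC, rfl⟩ := Submodule.mem_sup.mp hx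
        have h1 : ⁅a, m⁆ ∈ M.toSubmodule ⊓ C.toSubmodule :=
          ⟨M.lie_mem haM hmM, C.lie_mem hmC⟩
        have hbm : ⁅b, m⁆ ∈ (D : LieSubmodule F L L) := by
          exact habel (LieSubmodule.lie_mem_lie hbC hmC)
        have h2 : ⁅b, m⁆ ∈ M.toSubmodule ⊓ C.toSubmodule := ⟨hDM hbm, hDC hbm⟩
        have : ⁅a + b, m⁆ = ⁅a, m⁆ + ⁅b, m⁆ := add_lie a b m
        rw [this]
        exact Submodule.add_mem _ h1 h2 } with hN
  have hDN : D ≤ N := by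
    intro x hx
    exact ⟨hDM hx, hDC hx⟩
  have hNC : N ≤ C := fun x hx => hx.2
  rcases hCD.2 N hDN hNC with h | h
  · ext x
    constructor
    · intro hx
      have hxN : x ∈ N := ⟨hx.1, hx.2⟩
      rw [h] at hxN
      exact hxN
    · intro hx
      exact ⟨hDM hx, hDC hx⟩
  · exfalso
    have hCM : C.toSubmodule ≤ M.toSubmodule := by
      intro x hx
      have : x ∈ N := by rw [h]; exact hx
      exact this.1
    have : M.toSubmodule = ⊤ := by rw [← hsup, sup_eq_left.mpr hCM]
    refine hM.1 ?_
    ext x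
    simp only [LieSubalgebra.mem_top, iff_true]
    show x ∈ M.toSubmodule
    rw [this]
    trivial
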